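/- Assuming the axiom of choice, there exists a set M ⊆ ℝ \ {0} such that: (1) 1 ∈ M and −√2 ∈ M; (2) M is closed under multiplication by positive rationals; (3) M is closed under addition; and (4) M ∪ (−M) = ℝ \ {0} (where −M = {−m : m ∈ M}). In particular 0 ∉ M. -/

import Mathlib

noncomputable section

open Real Set

private lemma pair_li : LinearIndependent ℚ ![(1 : ℝ), Real.sqrt 2] := by
  rw [LinearIndependent.pair_iff]
  intro s t hst
  simp only [Rat.smul_def, mul_one] at hst
  by_contra h
  have ht : t ≠ 0 := by
    rintro rfl
    simp only [Rat.cast_zero, zero_mul, add_zero, Rat.cast_eq_zero] at hst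
    exact h ⟨hst, rfl⟩
  apply irrational_sqrt_two
  refine ⟨-s / t, ?_⟩
  have ht' : (t : ℝ) ≠ 0 := by exact_mod_cast ht
  push_cast
  field_simp
  linarith [hst]

private def sPair : Set ℝ := Set.range ![(1 : ℝ), Real.sqrt 2]

private lemma sPair_li : LinearIndepOn ℚ id sPair :=
  pair_li.linearIndepOn_id

private def fQ : ℝ →ₗ[ℚ] ℝ :=
  (Module.Basis.extend sPair_li).constr ℚ
    (fun i => if (i : ℝ) = 1 then (1 : ℝ) else if (i : ℝ) = Real.sqrt 2 then -1 else 0)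

private lemma one_mem_sPair : (1 : ℝ) ∈ sPair := ⟨0, rfl⟩
private lemma sqrt2_mem_sPair : Real.sqrt 2 ∈ sPair := ⟨1, rfl⟩

private lemma fQ_one : fQ 1 = 1 := by
  have h1 : (1 : ℝ) ∈ sPair_li.extend (subset_univ sPair) :=
    sPair_li.subset_extend _ one_mem_sPair
  have := (Module.Basis.extend sPair_li).constr_basis ℚ
    (fun i => if (i : ℝ) = 1 then (1 : ℝ) else if (i : ℝ) = Real.sqrt 2 then -1 else 0)
    ⟨1, h1⟩
  rw [Module.Basis.extend_apply_self] at this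
  simpa [fQ] using this

private lemma fQ_sqrt2 : fQ (Real.sqrt 2) = -1 := by
  have h1 : Real.sqrt 2 ∈ sPair_li.extend (subset_univ sPair) :=
    sPair_li.subset_extend _ sqrt2_mem_sPair
  have := (Module.Basis.extend sPair_li).constr_basis ℚ
    (fun i => if (i : ℝ) = 1 then (1 : ℝ) else if (i : ℝ) = Real.sqrt 2 then -1 else 0)
    ⟨Real.sqrt 2, h1⟩
  rw [Module.Basis.extend_apply_self] at this
  have hne : Real.sqrt 2 ≠ 1 := fun h => irrational_sqrt_two (h ▸ ⟨1, by norm_num⟩)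
  simpa [fQ, hne] using this

theorem stmt4 :
    ∃ M : Set ℝ,
      (0 : ℝ) ∉ M ∧
      (∀ x ∈ M, x ≠ 0) ∧
      (1 : ℝ) ∈ M ∧
      -Real.sqrt 2 ∈ M ∧
      (∀ t ∈ M, ∀ q : ℚ, 0 < q → (q : ℝ) * t ∈ M) ∧
      (∀ s ∈ M, ∀ t ∈ M, s + t ∈ M) ∧
      M ∪ (-M) = {x : ℝ | x ≠ 0} := by
  refine ⟨{x : ℝ | 0 < fQ x ∨ (fQ x = 0 ∧ 0 < x)}, ?_, ?_, ?_, ?_, ?_, ?_, ?_⟩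
  · simp [Set.mem_setOf_eq, map_zero]
  · rintro x (hx | ⟨hx, hx'⟩)
    · rintro rfl; rw [map_zero] at hx; exact lt_irrefl 0 hx
    · exact ne_of_gt hx'
  · left; rw [fQ_one]; norm_num
  · left; rw [map_neg, fQ_sqrt2]; norm_num
  · rintro t (ht | ⟨ht, ht'⟩) q hq
    · left
      have : fQ ((q : ℝ) * t) = (q : ℝ) * fQ t := by
        rw [← Rat.smul_def, map_smul, Rat.smul_def]
      rw [this]
      exact mul_pos (by exact_mod_cast hq) ht
    · right
      constructor
      · rw [← Rat.smul_def, map_smul, ht, smul_zero]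
      · exact mul_pos (by exact_mod_cast hq) ht'
  · rintro s (hs | ⟨hs, hs'⟩) t (ht | ⟨ht, ht'⟩) <;>
      simp only [Set.mem_setOf_eq, map_add]
    · left; linarith
    · left; linarith
    · left; linarith
    · right; constructor <;> linarith
  · ext x
    simp only [Set.mem_union, Set.mem_neg, Set.mem_setOf_eq, map_neg]
    constructor
    · rintro ((h | ⟨h, h'⟩) | (h | ⟨h, h'⟩))
      · rintro rfl; rw [map_zero] at h; exact lt_irrefl 0 h
      · exact ne_of_gt h'
      · rintro rfl; rw [map_zero] at h; simp at h
      · linarith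
    · intro hx
      rcases lt_trichotomy (fQ x) 0 with h | h | h
      · right; left; linarith
      · rcases hx.lt_or_gt with h' | h'
        · right; right; exact ⟨by linarith, by linarith⟩
        · left; right; exact ⟨h, h'⟩
      · left; left; exact h
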